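/- Let w(s) be a nonvanishing C¹ solution of the hypergeometric equation s(1−s)w'' + (1/2 − (5/6)s)w' + (35/144)w = 0 on an interval where 144 s(s−1) (w')² + 5 w² > 0. Define R(s) = ε√15 w / (3√(144 s(s−1)(w')² + 5w²)) and z(s) = −8ε√15 (144 s²(s−1)(w')³ − 72 s(s−1)w(w')² + (5/12)w³) / (3(144 s(s−1)(w')² + 5w²)^{3/2}) with ε = ±1. Then wherever dz/ds ≠ 0 and 9(54R³ − 9R + z)(2R + 3z) ≠ 0, the function R, regarded as a function of z, satisfies dR/dz = (486R⁴ − 171R² + 9zR + 5)/(9(54R³ − 9R + z)(2R + 3z)). -/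

import Mathlib

set_option maxHeartbeats 1000000 in
lemma kud_alg (s W W' a T Rs zs Rds zds : ℝ) (ha0 : a ≠ 0) (hT : T^2 = 15)
    (ha2 : a^2 = 144*s*(s-1)*W'^2 + 5*W^2)
    (hRs : Rs = T*W/(3*a))
    (hzs : zs = -8*T*(144*s^2*(s-1)*W'^3 - 72*s*(s-1)*W*W'^2 + 5/12*W^3)/(3*a^3))
    (hRds : Rds = T*(144*s*(s-1)*W'^3 - 24*s*W*W'^2 - 35*W^2*W')/(3*a^3))
    (hzds : zds = -8*T*(-10368*s^3*(s-1)*W'^5 - 432*s^2*(s-1)*W*W'^4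
        + 3780*s*(s-1)*W^2*W'^3 + 375*s*W^3*W'^2 - 875/4*W^4*W')/(3*a^5))
    (hzd0 : zds ≠ 0) (hDn0 : 9*(54*Rs^3 - 9*Rs + zs)*(2*Rs+3*zs) ≠ 0) :
    Rds/zds = (486*Rs^4 - 171*Rs^2 + 9*zs*Rs + 5)/(9*(54*Rs^3-9*Rs+zs)*(2*Rs+3*zs)) := by
  have hX : 54*Rs^3 - 9*Rs + zs
      = T*(30*W^3 - 3*W*(144*s*(s-1)*W'^2 + 5*W^2)
          - 8/3*(144*s^2*(s-1)*W'^3 - 72*s*(s-1)*W*W'^2 + 5/12*W^3))/a^3 := by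
    rw [hRs, hzs]
    linear_combination (norm := skip) (2*T*W^3/a^3)*hT - (3*T*W/a^3)*ha2
    rw [sub_eq_zero]; field_simp; ring
  have hY : 2*Rs + 3*zs
      = T*(2/3*W*(144*s*(s-1)*W'^2 + 5*W^2)
          - 8*(144*s^2*(s-1)*W'^3 - 72*s*(s-1)*W*W'^2 + 5/12*W^3))/a^3 := by
    rw [hRs, hzs]
    linear_combination (norm := skip) (2*T*W/(3*a^3))*ha2
    rw [sub_eq_zero]; field_simp; ring
  have hN : 486*Rs^4 - 171*Rs^2 + 9*zs*Rs + 5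
      = (1350*W^4 - 285*W^2*(144*s*(s-1)*W'^2 + 5*W^2)
          - 120*W*(144*s^2*(s-1)*W'^3 - 72*s*(s-1)*W*W'^2 + 5/12*W^3)
          + 5*(144*s*(s-1)*W'^2 + 5*W^2)^2)/a^4 := by
    rw [hRs, hzs]
    linear_combination (norm := skip) ((6*W^4*(T^2+15) - 19*W^2*a^2 - 8*W*(144*s^2*(s-1)*W'^3 - 72*s*(s-1)*W*W'^2 + 5/12*W^3))/a^4)*hT + ((-285*W^2 + 5*(a^2 + 144*s*(s-1)*W'^2 + 5*W^2))/a^4)*ha2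
    rw [sub_eq_zero]; field_simp; ring
  have hMain : (135:ℝ)*(144*s*(s-1)*W'^3 - 24*s*W*W'^2 - 35*W^2*W')
      * (30*W^3 - 3*W*(144*s*(s-1)*W'^2 + 5*W^2)
          - 8/3*(144*s^2*(s-1)*W'^3 - 72*s*(s-1)*W*W'^2 + 5/12*W^3))
      * (2/3*W*(144*s*(s-1)*W'^2 + 5*W^2)
          - 8*(144*s^2*(s-1)*W'^3 - 72*s*(s-1)*W*W'^2 + 5/12*W^3))
      = -8*(1350*W^4 - 285*W^2*(144*s*(s-1)*W'^2 + 5*W^2)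
          - 120*W*(144*s^2*(s-1)*W'^3 - 72*s*(s-1)*W*W'^2 + 5/12*W^3)
          + 5*(144*s*(s-1)*W'^2 + 5*W^2)^2)
        * (-10368*s^3*(s-1)*W'^5 - 432*s^2*(s-1)*W*W'^4
            + 3780*s*(s-1)*W^2*W'^3 + 375*s*W^3*W'^2 - 875/4*W^4*W') := by
    ring
  rw [div_eq_div_iff hzd0 hDn0, hX, hY, hN, hRds, hzds]
  linear_combination (3*T*(144*s*(s-1)*W'^3 - 24*s*W*W'^2 - 35*W^2*W')
      * (30*W^3 - 3*W*(144*s*(s-1)*W'^2 + 5*W^2)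
          - 8/3*(144*s^2*(s-1)*W'^3 - 72*s*(s-1)*W*W'^2 + 5/12*W^3))
      * (2/3*W*(144*s*(s-1)*W'^2 + 5*W^2)
          - 8*(144*s^2*(s-1)*W'^3 - 72*s*(s-1)*W*W'^2 + 5/12*W^3))/a^9) * hT
    + (T/(3*a^9)) * hMain

/-- the hypergeometric parametric formulae
`R(s) = ε√15 w/(3√D)`,
`z(s) = −8ε√15(144s²(s−1)w_s³ − 72s(s−1)w w_s² + (5/12)w³)/(3 D^{3/2})`,
`D = 144 s(s−1)w_s² + 5w² > 0`, where `w` solves the hypergeometric equation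
`s(1−s)w'' + (1/2 − (5/6)s)w' + (35/144)w = 0`, give a solution of the
Kudashev equation, `dR/dz` being computed as `(dR/ds)/(dz/ds)`. -/
theorem hypergeometric_solution_satisfies_kudashev
    (I : Set ℝ) (hI : IsOpen I) (ε : ℝ) (hε : ε = 1 ∨ ε = -1)
    (w w' w'' R Rd z zd : ℝ → ℝ)
    (hw : ∀ s ∈ I, HasDerivAt w (w' s) s)
    (hw' : ∀ s ∈ I, HasDerivAt w' (w'' s) s)
    (hODE : ∀ s ∈ I,
      s * (1 - s) * w'' s + (1/2 - 5/6 * s) * w' s + 35/144 * w s = 0)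
    (hD : ∀ s ∈ I, 144 * s * (s - 1) * (w' s) ^ 2 + 5 * (w s) ^ 2 > 0)
    (hRdef : ∀ s ∈ I, R s = ε * Real.sqrt 15 * w s
      / (3 * Real.sqrt (144 * s * (s - 1) * (w' s) ^ 2 + 5 * (w s) ^ 2)))
    (hzdef : ∀ s ∈ I, z s = -8 * ε * Real.sqrt 15
      * (144 * s ^ 2 * (s - 1) * (w' s) ^ 3
          - 72 * s * (s - 1) * w s * (w' s) ^ 2 + 5/12 * (w s) ^ 3)
      / (3 * (144 * s * (s - 1) * (w' s) ^ 2 + 5 * (w s) ^ 2) ^ ((3 : ℝ) / 2)))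
    (hR : ∀ s ∈ I, HasDerivAt R (Rd s) s)
    (hz : ∀ s ∈ I, HasDerivAt z (zd s) s) :
    ∀ s ∈ I, zd s ≠ 0 →
      9 * (54 * (R s) ^ 3 - 9 * R s + z s) * (2 * R s + 3 * z s) ≠ 0 →
      Rd s / zd s
        = (486 * (R s) ^ 4 - 171 * (R s) ^ 2 + 9 * z s * R s + 5)
          / (9 * (54 * (R s) ^ 3 - 9 * R s + z s) * (2 * R s + 3 * z s)) := by
  intro s hs hzd0 hDn0
  have hws := hw s hs
  have hw's := hw' s hs
  have hDpos := hD s hs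
  have hOD : s*(s-1)*w'' s = (1/2 - 5/6*s)*w' s + 35/144*w s := by
    linear_combination (-1 : ℝ) * hODE s hs
  have hA0' : 0 < Real.sqrt (144 * s * (s - 1) * (w' s) ^ 2 + 5 * (w s) ^ 2) :=
    Real.sqrt_pos.mpr hDpos
  have hA0 : Real.sqrt (144 * s * (s - 1) * (w' s) ^ 2 + 5 * (w s) ^ 2) ≠ 0 := ne_of_gt hA0'
  have hA2 : (Real.sqrt (144 * s * (s - 1) * (w' s) ^ 2 + 5 * (w s) ^ 2)) ^ 2
      = 144 * s * (s - 1) * (w' s) ^ 2 + 5 * (w s) ^ 2 := Real.sq_sqrt hDpos.le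
  have h15 : Real.sqrt 15 ^ 2 = 15 := Real.sq_sqrt (by norm_num)
  have hT : (ε * Real.sqrt 15) ^ 2 = 15 := by
    have h15 : Real.sqrt 15 ^ 2 = 15 := Real.sq_sqrt (by norm_num)
    rcases hε with h | h <;> rw [h] <;> nlinarith [h15]
  -- derivative of D(x)
  have hDd : HasDerivAt (fun x : ℝ => 144 * x * (x - 1) * (w' x) ^ 2 + 5 * (w x) ^ 2)
      (144*(2*s-1)*(w' s)^2 + 288*s*(s-1)*(w' s)*(w'' s) + 10*(w s)*(w' s)) s := by
    have h := ((((hasDerivAt_id' (𝕜 := ℝ) (x := s)).const_mul (144:ℝ)).mul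
        ((hasDerivAt_id' (𝕜 := ℝ) (x := s)).sub_const 1)).mul (hw's.pow 2)).add ((hws.pow 2).const_mul (5:ℝ))
    refine (h.congr_deriv (by simp only [Pi.mul_apply, Pi.pow_apply]; ring)).congr_of_eventuallyEq (Filter.Eventually.of_forall fun x => ?_)
    simp only [Pi.mul_apply, Pi.add_apply, Pi.sub_apply, Pi.pow_apply]
  -- derivative of R-formula
  have hFR : HasDerivAt (fun x : ℝ => ε * Real.sqrt 15 * w x
      / (3 * Real.sqrt (144 * x * (x - 1) * (w' x) ^ 2 + 5 * (w x) ^ 2)))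
      ((ε * Real.sqrt 15 * w' s * (3 * Real.sqrt (144 * s * (s - 1) * (w' s) ^ 2 + 5 * (w s) ^ 2))
        - ε * Real.sqrt 15 * w s * (3 * ((144*(2*s-1)*(w' s)^2 + 288*s*(s-1)*(w' s)*(w'' s) + 10*(w s)*(w' s))
            / (2 * Real.sqrt (144 * s * (s - 1) * (w' s) ^ 2 + 5 * (w s) ^ 2)))))
        / (3 * Real.sqrt (144 * s * (s - 1) * (w' s) ^ 2 + 5 * (w s) ^ 2)) ^ 2) s := by
    exact (hws.const_mul (ε * Real.sqrt 15)).div ((hDd.sqrt hDpos.ne').const_mul 3)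
      (by positivity)
  have hRev : R =ᶠ[nhds s] (fun x : ℝ => ε * Real.sqrt 15 * w x
      / (3 * Real.sqrt (144 * x * (x - 1) * (w' x) ^ 2 + 5 * (w x) ^ 2))) :=
    Filter.eventuallyEq_of_mem (hI.mem_nhds hs) (fun x hx => hRdef x hx)
  have hRdval := (hR s hs).unique (hFR.congr_of_eventuallyEq hRev)
  -- derivative of P(x)
  have hPd : HasDerivAt (fun x : ℝ => 144 * x ^ 2 * (x - 1) * (w' x) ^ 3
      - 72 * x * (x - 1) * w x * (w' x) ^ 2 + 5/12 * (w x) ^ 3)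
      (144*(3*s^2-2*s)*(w' s)^3 + 432*s^2*(s-1)*(w' s)^2*(w'' s)
        - 72*(2*s-1)*(w s)*(w' s)^2 - 72*s*(s-1)*(w' s)^3
        - 144*s*(s-1)*(w s)*(w' s)*(w'' s) + 5/4*(w s)^2*(w' s)) s := by
    have h := (((((hasDerivAt_pow 2 s).const_mul (144:ℝ)).mul
          ((hasDerivAt_id' (𝕜 := ℝ) (x := s)).sub_const 1)).mul (hw's.pow 3)).sub
        (((((hasDerivAt_id' (𝕜 := ℝ) (x := s)).const_mul (72:ℝ)).mul
          ((hasDerivAt_id' (𝕜 := ℝ) (x := s)).sub_const 1)).mul hws).mul (hw's.pow 2))).add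
        ((hws.pow 3).const_mul (5/12:ℝ))
    refine (h.congr_deriv (by simp only [Pi.mul_apply, Pi.pow_apply]; ring)).congr_of_eventuallyEq (Filter.Eventually.of_forall fun x => ?_)
    simp only [Pi.mul_apply, Pi.add_apply, Pi.sub_apply, Pi.pow_apply]
  -- derivative of z-formula
  have hden0 : (3 : ℝ) * (144 * s * (s - 1) * (w' s) ^ 2 + 5 * (w s) ^ 2) ^ ((3 : ℝ) / 2) ≠ 0 := by
    positivity
  have hFz : HasDerivAt (fun x : ℝ => -8 * ε * Real.sqrt 15
      * (144 * x ^ 2 * (x - 1) * (w' x) ^ 3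
          - 72 * x * (x - 1) * w x * (w' x) ^ 2 + 5/12 * (w x) ^ 3)
      / (3 * (144 * x * (x - 1) * (w' x) ^ 2 + 5 * (w x) ^ 2) ^ ((3 : ℝ) / 2)))
      ((-8 * ε * Real.sqrt 15 * (144*(3*s^2-2*s)*(w' s)^3 + 432*s^2*(s-1)*(w' s)^2*(w'' s)
          - 72*(2*s-1)*(w s)*(w' s)^2 - 72*s*(s-1)*(w' s)^3
          - 144*s*(s-1)*(w s)*(w' s)*(w'' s) + 5/4*(w s)^2*(w' s))
            * (3 * (144 * s * (s - 1) * (w' s) ^ 2 + 5 * (w s) ^ 2) ^ ((3 : ℝ) / 2))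
        - (-8 * ε * Real.sqrt 15 * (144 * s ^ 2 * (s - 1) * (w' s) ^ 3
            - 72 * s * (s - 1) * w s * (w' s) ^ 2 + 5/12 * (w s) ^ 3))
            * (3 * ((144*(2*s-1)*(w' s)^2 + 288*s*(s-1)*(w' s)*(w'' s) + 10*(w s)*(w' s)) * ((3:ℝ)/2)
              * (144 * s * (s - 1) * (w' s) ^ 2 + 5 * (w s) ^ 2) ^ ((3 : ℝ) / 2 - 1))))
        / (3 * (144 * s * (s - 1) * (w' s) ^ 2 + 5 * (w s) ^ 2) ^ ((3 : ℝ) / 2)) ^ 2) s := by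
    exact (hPd.const_mul (-8 * ε * Real.sqrt 15)).div
      ((hDd.rpow_const (Or.inr (by norm_num))).const_mul 3) hden0
  have hzev : z =ᶠ[nhds s] (fun x : ℝ => -8 * ε * Real.sqrt 15
      * (144 * x ^ 2 * (x - 1) * (w' x) ^ 3
          - 72 * x * (x - 1) * w x * (w' x) ^ 2 + 5/12 * (w x) ^ 3)
      / (3 * (144 * x * (x - 1) * (w' x) ^ 2 + 5 * (w x) ^ 2) ^ ((3 : ℝ) / 2))) :=
    Filter.eventuallyEq_of_mem (hI.mem_nhds hs) (fun x hx => hzdef x hx)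
  have hzdval := (hz s hs).unique (hFz.congr_of_eventuallyEq hzev)
  -- rpow to sqrt powers
  have h32 : (144 * s * (s - 1) * (w' s) ^ 2 + 5 * (w s) ^ 2) ^ ((3 : ℝ) / 2)
      = (Real.sqrt (144 * s * (s - 1) * (w' s) ^ 2 + 5 * (w s) ^ 2)) ^ 3 := by
    rw [← hA2, ← Real.rpow_natCast (Real.sqrt _) 2,
      ← Real.rpow_mul (Real.sqrt_nonneg _), ← Real.rpow_natCast (Real.sqrt _) 3]
    norm_num
  have h12 : (144 * s * (s - 1) * (w' s) ^ 2 + 5 * (w s) ^ 2) ^ ((3 : ℝ) / 2 - 1)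
      = Real.sqrt (144 * s * (s - 1) * (w' s) ^ 2 + 5 * (w s) ^ 2) := by
    rw [show (3:ℝ)/2 - 1 = 1/2 by norm_num, ← Real.sqrt_eq_rpow]
  rw [h32, h12] at hzdval
  have hRv := hRdef s hs
  have hzv : z s = -8 * (ε * Real.sqrt 15) * (144*s^2*(s-1)*(w' s)^3
      - 72*s*(s-1)*(w s)*(w' s)^2 + 5/12*(w s)^3)
      / (3 * (Real.sqrt (144 * s * (s - 1) * (w' s) ^ 2 + 5 * (w s) ^ 2))^3) := by
    rw [hzdef s hs, h32]; ring
  generalize hgen : Real.sqrt (144 * s * (s - 1) * (w' s) ^ 2 + 5 * (w s) ^ 2) = A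
    at hA0 hA2 hRdval hzdval hRv hzv
  have hRdv : Rd s = (ε * Real.sqrt 15) * (144*s*(s-1)*(w' s)^3 - 24*s*(w s)*(w' s)^2
      - 35*(w s)^2*(w' s)) / (3 * A^3) := by
    rw [hRdval]
    linear_combination (norm := skip) (ε*Real.sqrt 15*(w' s)/(3*A^3))*hA2 - (48*ε*Real.sqrt 15*(w s)*(w' s)/A^3)*hOD
    rw [sub_eq_zero]; field_simp; ring
  have hzdv : zd s = -8 * (ε * Real.sqrt 15) * (-10368*s^3*(s-1)*(w' s)^5
      - 432*s^2*(s-1)*(w s)*(w' s)^4 + 3780*s*(s-1)*(w s)^2*(w' s)^3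
      + 375*s*(w s)^3*(w' s)^2 - 875/4*(w s)^4*(w' s)) / (3 * A^5) := by
    rw [hzdval]
    linear_combination (norm := skip) (-8*ε*Real.sqrt 15*(144*(3*s^2-2*s)*(w' s)^3 + 432*s^2*(s-1)*(w' s)^2*(w'' s) - 72*(2*s-1)*(w s)*(w' s)^2 - 72*s*(s-1)*(w' s)^3 - 144*s*(s-1)*(w s)*(w' s)*(w'' s) + 5/4*(w s)^2*(w' s))/(3*A^5))*hA2 + (-8*ε*Real.sqrt 15*((432*s*(w' s)^2 - 144*(w s)*(w' s))*(144*s*(s-1)*(w' s)^2 + 5*(w s)^2) - 432*(144*s^2*(s-1)*(w' s)^3 - 72*s*(s-1)*(w s)*(w' s)^2 + 5/12*(w s)^3)*(w' s))/(3*A^5))*hOD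
    rw [sub_eq_zero]; field_simp; ring
  exact kud_alg s (w s) (w' s) A (ε * Real.sqrt 15) (R s) (z s) (Rd s) (zd s)
    hA0 hT hA2 hRv hzv hRdv hzdv hzd0 hDn0
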